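/- Let b > 1 and let A = {⌊p^{1/b}⌋ : p prime} ⊂ ℕ. Then A has positive upper density: limsup_{x→∞} |A ∩ [1,x]|/x ≥ (b-1)/(3b²) > 0, assuming the prime number theorem π(x) ∼ x/log x and the Montgomery–Vaughan bound that there exists y₀ > 0 with π(x+y) - π(x) ≤ 3y/log y for all x > 0 and y ≥ y₀. -/

import Mathlib

noncomputable def primepi (x : ℝ) : ℕ := Set.ncard {p : ℕ | p.Prime ∧ (p : ℝ) ≤ x}

open Finset in
lemma mem_primesUpto {x : ℝ} {p : ℕ} :
    p ∈ (Finset.range (⌊x⌋₊ + 1)).filter Nat.Prime ↔ p.Prime ∧ (p : ℝ) ≤ x := by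
  simp only [Finset.mem_filter, Finset.mem_range, Nat.lt_succ_iff]
  constructor
  · rintro ⟨hle, hp⟩
    rcases le_or_gt 0 x with h0 | h0
    · exact ⟨hp, le_trans (Nat.cast_le.2 hle) (Nat.floor_le h0)⟩
    · simp [Nat.floor_of_nonpos h0.le] at hle
      exact absurd (hle ▸ hp) Nat.not_prime_zero
  · rintro ⟨hp, hx⟩
    exact ⟨Nat.le_floor hx, hp⟩

lemma primepi_eq_card (x : ℝ) :
    primepi x = ((Finset.range (⌊x⌋₊ + 1)).filter Nat.Prime).card := by
  rw [primepi, ← Set.ncard_coe_finset]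
  congr 1
  ext p
  simp only [Finset.mem_coe, mem_primesUpto, Set.mem_setOf_eq]

lemma primepi_mono : Monotone (fun x => primepi x) := by
  intro x y hxy
  simp only [primepi_eq_card]
  apply Finset.card_le_card
  intro p hp
  rw [mem_primesUpto] at hp ⊢
  exact ⟨hp.1, hp.2.trans hxy⟩

lemma rpow_gap {b : ℝ} (hb : 1 ≤ b) {a : ℝ} (ha : 0 ≤ a) :
    (a+1) ^ b - a ^ b ≤ b * (a+1) ^ (b-1) := by
  have h1 : (0:ℝ) < a + 1 := by linarith
  have hs : (-1:ℝ) ≤ -(1/(a+1)) := by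
    rw [neg_le_neg_iff]
    rw [div_le_one h1]; linarith
  have key := one_add_mul_self_le_rpow_one_add hs hb
  have he : (1 + -(1/(a+1))) = a / (a+1) := by field_simp; ring
  rw [he] at key
  have h2 : (a / (a+1)) ^ b = a ^ b / (a+1) ^ b := Real.div_rpow ha h1.le b
  rw [h2] at key
  have hpos : (0:ℝ) < (a+1) ^ b := Real.rpow_pos_of_pos h1 b
  have := mul_le_mul_of_nonneg_right key hpos.le
  rw [div_mul_cancel₀ _ hpos.ne'] at this
  have hsplit : (1 + b * -(1/(a+1))) * (a+1)^b = (a+1)^b - b * (a+1)^(b-1) := by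
    have : (a+1) ^ b / (a+1) = (a+1) ^ (b-1) := by
      rw [eq_comm, Real.rpow_sub h1, Real.rpow_one]
    rw [← this]; field_simp; ring
  rw [hsplit] at this
  linarith

/-- main counting inequality -/
lemma count_lower (b : ℝ) (hb : 1 < b) (y₀ : ℝ) (hy₀ : 0 < y₀)
    (hMV : ∀ x : ℝ, 0 < x → ∀ y : ℝ, y₀ ≤ y →
      ((primepi (x + y) : ℝ) - primepi x) ≤ 3 * y / Real.log y)
    (x : ℝ) (hx : 1 ≤ x) :
    (primepi (x ^ b) : ℝ) - primepi ((2:ℝ) ^ b) ≤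
      (3 * max (max y₀ 3) (b*(x+1)^(b-1)+1) / Real.log (max (max y₀ 3) (b*(x+1)^(b-1)+1))) *
        (Set.ncard {m : ℕ | (∃ p : ℕ, p.Prime ∧ m = ⌊(p : ℝ) ^ (1 / b)⌋₊) ∧
          1 ≤ m ∧ (m : ℝ) ≤ x}) := by
  classical
  set Y : ℝ := max (max y₀ 3) (b*(x+1)^(b-1)+1) with hYdef
  have hx0 : (0:ℝ) < x := by linarith
  have hb0 : (0:ℝ) < b := by linarith
  have hY3 : (3:ℝ) ≤ Y := le_trans (le_max_right _ _) (le_max_left _ _)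
  have hYpos : (0:ℝ) < Y := by linarith
  have hYe : Real.exp 1 ≤ Y := by
    have := Real.exp_one_lt_d9
    linarith
  have hlogY : (1:ℝ) ≤ Real.log Y := by
    rwa [Real.le_log_iff_exp_le hYpos]
  have hlogYpos : (0:ℝ) < Real.log Y := by linarith
  set n : ℕ := ⌊3 * Y / Real.log Y⌋₊ with hndef
  set N : ℕ := ⌊x ^ b⌋₊ with hNdef
  have hxb0 : (0:ℝ) ≤ x ^ b := (Real.rpow_pos_of_pos hx0 b).le
  set P : Finset ℕ := (Finset.range (N+1)).filter
    (fun p => Nat.Prime p ∧ (2:ℝ)^b ≤ (p:ℝ)) with hPdef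
  set f : ℕ → ℕ := fun p => ⌊(p:ℝ) ^ (1/b)⌋₊ with hfdef
  -- facts about members of P
  have hPmem : ∀ p ∈ P, Nat.Prime p ∧ (2:ℝ)^b ≤ (p:ℝ) ∧ (p:ℝ) ≤ x ^ b := by
    intro p hp
    rw [hPdef, Finset.mem_filter, Finset.mem_range, Nat.lt_succ_iff] at hp
    refine ⟨hp.2.1, hp.2.2, ?_⟩
    exact le_trans (Nat.cast_le.2 hp.1) (Nat.floor_le hxb0)
  -- Step B : fiber bound
  have fiber : ∀ m ∈ P.image f, (P.filter (fun p => f p = m)).card ≤ n := by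
    intro m hm
    obtain ⟨p₀, hp₀P, hp₀⟩ := Finset.mem_image.1 hm
    obtain ⟨hp₀pr, hp₀lo, hp₀hi⟩ := hPmem p₀ hp₀P
    have hp₀0 : (0:ℝ) ≤ (p₀:ℝ) := Nat.cast_nonneg _
    have hbne : b ≠ 0 := ne_of_gt hb0
    -- m ≥ 2
    have hm2 : 2 ≤ m := by
      have h2 : (2:ℝ) ≤ (p₀:ℝ) ^ (1/b) := by
        have := Real.rpow_le_rpow (by positivity) hp₀lo (by positivity : (0:ℝ) ≤ 1/b)
        rwa [← Real.rpow_mul (by norm_num : (0:ℝ) ≤ 2), mul_one_div,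
          div_self hbne, Real.rpow_one] at this
      rw [← hp₀]
      exact_mod_cast Nat.le_floor (by exact_mod_cast h2)
    -- m ≤ x
    have hmx : (m:ℝ) ≤ x := by
      have h1 : (p₀:ℝ) ^ (1/b) ≤ x := by
        have := Real.rpow_le_rpow hp₀0 hp₀hi (by positivity : (0:ℝ) ≤ 1/b)
        rwa [← Real.rpow_mul hx0.le, mul_one_div, div_self hbne, Real.rpow_one] at this
      rw [← hp₀]
      exact le_trans (Nat.floor_le (by positivity)) h1
    have hm0 : (0:ℝ) < (m:ℝ) := by exact_mod_cast lt_of_lt_of_le (by norm_num) hm2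
    -- each fiber element p satisfies m^b ≤ p ≤ (m+1)^b
    have hfib : ∀ p ∈ P.filter (fun p => f p = m),
        Nat.Prime p ∧ ((m:ℝ)^b ≤ (p:ℝ) ∧ (p:ℝ) ≤ ((m:ℝ)+1)^b) := by
      intro p hp
      rw [Finset.mem_filter] at hp
      obtain ⟨hpP, hpf⟩ := hp
      obtain ⟨hppr, _, _⟩ := hPmem p hpP
      have hp0 : (0:ℝ) ≤ (p:ℝ) := Nat.cast_nonneg _
      have hlo : (m:ℝ) ≤ (p:ℝ) ^ (1/b) := by
        rw [← hpf, hfdef]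
        exact Nat.floor_le (by positivity)
      have hhi : (p:ℝ) ^ (1/b) ≤ (m:ℝ) + 1 := by
        rw [← hpf, hfdef]
        exact (Nat.lt_floor_add_one _).le
      constructor
      · exact hppr
      constructor
      · have := Real.rpow_le_rpow hm0.le hlo hb0.le
        rwa [← Real.rpow_mul hp0, one_div, inv_mul_cancel₀ hbne, Real.rpow_one] at this
      · have := Real.rpow_le_rpow (by positivity) hhi hb0.le
        rwa [← Real.rpow_mul hp0, one_div, inv_mul_cancel₀ hbne, Real.rpow_one] at this
    -- disjoint union argument
    have h2b2 : (2:ℝ) ≤ (2:ℝ)^b := by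
      nth_rewrite 1 [← Real.rpow_one 2]
      exact Real.rpow_le_rpow_of_exponent_le (by norm_num) hb.le
    have hmb2 : (2:ℝ) ≤ (m:ℝ)^b := by
      refine le_trans h2b2 (Real.rpow_le_rpow (by norm_num) ?_ hb0.le)
      exact_mod_cast hm2
    have hx1pos : (0:ℝ) < (m:ℝ)^b - 1 := by linarith
    set A1 : Finset ℕ := (Finset.range (⌊(m:ℝ)^b - 1⌋₊ + 1)).filter Nat.Prime
    set A2 : Finset ℕ := (Finset.range (⌊((m:ℝ)+1)^b⌋₊ + 1)).filter Nat.Prime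
    have hdisj : Disjoint A1 (P.filter (fun p => f p = m)) := by
      rw [Finset.disjoint_left]
      intro p hp1 hp2
      have h1 := (mem_primesUpto.1 hp1).2
      have h2 := (hfib p hp2).2.1
      linarith
    have hsub : A1 ∪ P.filter (fun p => f p = m) ⊆ A2 := by
      intro p hp
      rcases Finset.mem_union.1 hp with h | h
      · obtain ⟨hpr, hle⟩ := mem_primesUpto.1 h
        refine mem_primesUpto.2 ⟨hpr, hle.trans ?_⟩
        have : ((m:ℝ))^b ≤ ((m:ℝ)+1)^b :=
          Real.rpow_le_rpow hm0.le (by linarith) hb0.le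
        linarith
      · obtain ⟨hpr, _, hhi⟩ := hfib p h
        exact mem_primesUpto.2 ⟨hpr, hhi⟩
    have hcard : A1.card + (P.filter (fun p => f p = m)).card ≤ A2.card := by
      rw [← Finset.card_union_of_disjoint hdisj]
      exact Finset.card_le_card hsub
    have hA1 : A1.card = primepi ((m:ℝ)^b - 1) := (primepi_eq_card _).symm
    have hA2 : A2.card = primepi (((m:ℝ)+1)^b) := (primepi_eq_card _).symm
    -- apply MV
    have hYy₀ : y₀ ≤ Y := le_trans (le_max_left _ _) (le_max_left _ _)
    have hMVap := hMV ((m:ℝ)^b - 1) hx1pos Y hYy₀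
    have hgap : ((m:ℝ)+1)^b ≤ (m:ℝ)^b - 1 + Y := by
      have h1 := rpow_gap hb.le hm0.le
      have h2 : ((m:ℝ)+1)^(b-1) ≤ (x+1)^(b-1) :=
        Real.rpow_le_rpow (by positivity) (by linarith) (by linarith)
      have h3 : b*(x+1)^(b-1)+1 ≤ Y := le_max_right _ _
      have h4 : b*((m:ℝ)+1)^(b-1) ≤ b*(x+1)^(b-1) :=
        mul_le_mul_of_nonneg_left h2 hb0.le
      linarith
    have hmono : (primepi (((m:ℝ)+1)^b) : ℝ) ≤ primepi ((m:ℝ)^b - 1 + Y) := by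
      exact_mod_cast primepi_mono hgap
    have hfc : ((P.filter (fun p => f p = m)).card : ℝ) ≤ 3 * Y / Real.log Y := by
      have : ((A1.card : ℝ)) + (P.filter (fun p => f p = m)).card ≤ (A2.card : ℝ) := by
        exact_mod_cast hcard
      rw [hA1, hA2] at this
      linarith
    exact Nat.le_floor hfc
  -- Step C
  have hC : P.card ≤ n * (P.image f).card := Finset.card_le_mul_card_image P n fiber
  -- Step D : primepi (x^b) ≤ P.card + primepi (2^b)
  have hD : primepi (x ^ b) ≤ P.card + primepi ((2:ℝ)^b) := by
    rw [primepi_eq_card (x ^ b), ← hNdef]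
    have hsplit := Finset.card_filter_add_card_filter_not
      (s := (Finset.range (N+1)).filter Nat.Prime) (p := fun p : ℕ => (2:ℝ)^b ≤ (p:ℝ))
    have he1 : (((Finset.range (N+1)).filter Nat.Prime).filter
        (fun p : ℕ => (2:ℝ)^b ≤ (p:ℝ))).card = P.card := by
      rw [hPdef, Finset.filter_filter]
    have he2 : (((Finset.range (N+1)).filter Nat.Prime).filter
        (fun a : ℕ => ¬ (2:ℝ)^b ≤ (a:ℝ))).card ≤ primepi ((2:ℝ)^b) := by
      rw [primepi_eq_card]
      apply Finset.card_le_card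
      intro p hp
      rw [Finset.mem_filter, Finset.mem_filter] at hp
      obtain ⟨⟨_, hpr⟩, hlt⟩ := hp
      exact mem_primesUpto.2 ⟨hpr, (not_le.1 hlt).le⟩
    omega
  -- Step E : image card ≤ ncard S
  set S : Set ℕ := {m : ℕ | (∃ p : ℕ, p.Prime ∧ m = ⌊(p : ℝ) ^ (1 / b)⌋₊) ∧
      1 ≤ m ∧ (m : ℝ) ≤ x} with hSdef
  have hSfin : S.Finite := by
    apply Set.Finite.subset (Set.finite_Icc 1 ⌊x⌋₊)
    rintro m ⟨_, h1, h2⟩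
    exact ⟨h1, Nat.le_floor h2⟩
  have hE : (P.image f).card ≤ S.ncard := by
    rw [← Set.ncard_coe_finset]
    apply Set.ncard_le_ncard _ hSfin
    intro m hm
    rw [Finset.coe_image, Set.mem_image] at hm
    obtain ⟨p, hpP, hpf⟩ := hm
    obtain ⟨hppr, hlo, hhi⟩ := hPmem p hpP
    have hbne : b ≠ 0 := ne_of_gt hb0
    have hm2 : 2 ≤ m := by
      have h2 : (2:ℝ) ≤ (p:ℝ) ^ (1/b) := by
        have := Real.rpow_le_rpow (by positivity) hlo (by positivity : (0:ℝ) ≤ 1/b)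
        rwa [← Real.rpow_mul (by norm_num : (0:ℝ) ≤ 2), mul_one_div,
          div_self hbne, Real.rpow_one] at this
      rw [← hpf]
      exact_mod_cast Nat.le_floor (by exact_mod_cast h2)
    have hmx : (m:ℝ) ≤ x := by
      have h1 : (p:ℝ) ^ (1/b) ≤ x := by
        have := Real.rpow_le_rpow (Nat.cast_nonneg _) hhi (by positivity : (0:ℝ) ≤ 1/b)
        rwa [← Real.rpow_mul hx0.le, mul_one_div, div_self hbne, Real.rpow_one] at this
      rw [← hpf]
      exact le_trans (Nat.floor_le (by positivity)) h1
    exact ⟨⟨p, hppr, hpf.symm⟩, by omega, hmx⟩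
  -- combine
  have hn : (n:ℝ) ≤ 3 * Y / Real.log Y := Nat.floor_le (by positivity)
  have hchain : (primepi (x ^ b) : ℝ) - primepi ((2:ℝ)^b) ≤ (n:ℝ) * (P.image f).card := by
    have h1 : (primepi (x ^ b) : ℝ) ≤ (P.card : ℝ) + primepi ((2:ℝ)^b) := by exact_mod_cast hD
    have h2 : (P.card : ℝ) ≤ (n:ℝ) * (P.image f).card := by exact_mod_cast hC
    linarith
  calc (primepi (x ^ b) : ℝ) - primepi ((2:ℝ)^b) ≤ (n:ℝ) * (P.image f).card := hchain
    _ ≤ (3 * Y / Real.log Y) * S.ncard := by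
        apply mul_le_mul hn _ (Nat.cast_nonneg _) (by positivity)
        exact_mod_cast hE

open Filter Real

lemma tendsto_W (b : ℝ) (hb : 1 < b) :
    Tendsto (fun x : ℝ => b*(x+1)^(b-1)+1) atTop atTop := by
  apply tendsto_atTop_add_const_right
  apply Tendsto.const_mul_atTop (by linarith : (0:ℝ) < b)
  exact (tendsto_rpow_atTop (by linarith)).comp (tendsto_atTop_add_const_right _ 1 tendsto_id)

lemma tendsto_main (b : ℝ) (hb : 1 < b) (C y₁ : ℝ) (hC : 0 ≤ C) (hy₁ : 3 ≤ y₁)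
    (hPNT : Tendsto (fun x : ℝ => (primepi x : ℝ) * Real.log x / x) atTop (nhds 1)) :
    Tendsto (fun x : ℝ => ((primepi (x ^ b) : ℝ) - C) *
      Real.log (max y₁ (b*(x+1)^(b-1)+1)) / (3 * (max y₁ (b*(x+1)^(b-1)+1))) / x)
      atTop (nhds ((b-1)/(3*b^2))) := by
  have hb0 : (0:ℝ) < b := by linarith
  have hb1 : (0:ℝ) < b - 1 := by linarith
  have hbne : b ≠ 0 := ne_of_gt hb0
  -- replace max by W eventually
  have hev : ∀ᶠ x : ℝ in atTop, y₁ ≤ b*(x+1)^(b-1)+1 := (tendsto_W b hb).eventually_ge_atTop y₁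
  -- basic eventual positivity facts
  have hWpos : ∀ x : ℝ, 0 ≤ x → (1:ℝ) ≤ b*(x+1)^(b-1)+1 := by
    intro x hx
    have : (0:ℝ) < (x+1)^(b-1) := Real.rpow_pos_of_pos (by linarith) _
    nlinarith
  -- limit of u
  have hu : Tendsto (fun x : ℝ => (primepi (x ^ b) : ℝ) * Real.log (x ^ b) / (x ^ b))
      atTop (nhds 1) := hPNT.comp (tendsto_rpow_atTop hb0)
  -- limit of α
  have hq : Tendsto (fun x : ℝ => (x+1)^(-(b-1))) atTop (nhds 0) :=
    (tendsto_rpow_neg_atTop hb1).comp (tendsto_atTop_add_const_right _ 1 tendsto_id)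
  have hinv : Tendsto (fun x : ℝ => 1/(x+1)) atTop (nhds 0) := by
    simp only [one_div]
    exact (tendsto_inv_atTop_zero).comp (tendsto_atTop_add_const_right _ 1 tendsto_id)
  have hfrac : Tendsto (fun x : ℝ => x/(x+1)) atTop (nhds 1) := by
    have h1 : Tendsto (fun x : ℝ => 1 - 1/(x+1)) atTop (nhds 1) := by
      have := tendsto_const_nhds (x := (1:ℝ)) (f := (atTop : Filter ℝ))
      simpa using this.sub hinv
    apply h1.congr'
    filter_upwards [eventually_gt_atTop 0] with x hx
    field_simp; ring
  have hpow : Tendsto (fun x : ℝ => (x/(x+1))^(b-1)) atTop (nhds 1) := by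
    have hc : ContinuousAt (fun t : ℝ => t^(b-1)) 1 :=
      Real.continuousAt_rpow_const 1 (b-1) (Or.inl one_ne_zero)
    have := hc.tendsto.comp hfrac
    simpa [Function.comp_def] using this
  have hden : Tendsto (fun x : ℝ => b + (x+1)^(-(b-1))) atTop (nhds b) := by
    simpa using (tendsto_const_nhds (x := b) (f := (atTop : Filter ℝ))).add hq
  have hα : Tendsto (fun x : ℝ => x^(b-1) / (b*(x+1)^(b-1)+1)) atTop (nhds (1/b)) := by
    have h := hpow.div hden hbne
    apply h.congr'
    filter_upwards [eventually_gt_atTop 0] with x hx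
    have hx1 : (0:ℝ) < x + 1 := by linarith
    have hp1 : (0:ℝ) < (x+1)^(b-1) := Real.rpow_pos_of_pos hx1 _
    simp only [Pi.div_apply]
    rw [Real.div_rpow hx.le hx1.le, Real.rpow_neg hx1.le]
    field_simp
  -- limit of β
  have hlogx1 : Tendsto (fun x : ℝ => Real.log (x+1) / Real.log x) atTop (nhds 1) := by
    have hnum : Tendsto (fun x : ℝ => Real.log (1+1/x)) atTop (nhds 0) := by
      have hc : ContinuousAt Real.log 1 := Real.continuousAt_log one_ne_zero
      have harg : Tendsto (fun x : ℝ => 1 + 1/x) atTop (nhds 1) := by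
        simpa using (tendsto_const_nhds (x := (1:ℝ)) (f := (atTop : Filter ℝ))).add
          ((tendsto_inv_atTop_zero).congr (fun x => (one_div x).symm))
      have := hc.tendsto.comp harg
      simpa [Function.comp_def] using this
    have hzero : Tendsto (fun x : ℝ => Real.log (1+1/x) / Real.log x) atTop (nhds 0) :=
      hnum.div_atTop Real.tendsto_log_atTop
    have h1 : Tendsto (fun x : ℝ => 1 + Real.log (1+1/x) / Real.log x) atTop (nhds 1) := by
      simpa using (tendsto_const_nhds (x := (1:ℝ)) (f := (atTop : Filter ℝ))).add hzero
    apply h1.congr'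
    filter_upwards [eventually_gt_atTop 1] with x hx
    have hx0 : (0:ℝ) < x := by linarith
    have hlx : Real.log x ≠ 0 := ne_of_gt (Real.log_pos hx)
    have : Real.log (x+1) = Real.log x + Real.log (1+1/x) := by
      rw [← Real.log_mul (ne_of_gt hx0) (by positivity)]
      congr 1
      field_simp
    rw [this]
    field_simp
  have hsmall : Tendsto (fun x : ℝ => Real.log (b + (x+1)^(-(b-1))) / Real.log x)
      atTop (nhds 0) := by
    have hnum : Tendsto (fun x : ℝ => Real.log (b + (x+1)^(-(b-1)))) atTop (nhds (Real.log b)) :=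
      ((Real.continuousAt_log hbne).tendsto.comp hden)
    exact hnum.div_atTop Real.tendsto_log_atTop
  have hβ : Tendsto (fun x : ℝ => Real.log (b*(x+1)^(b-1)+1) / Real.log x)
      atTop (nhds (b-1)) := by
    have h := ((tendsto_const_nhds (x := b-1) (f := (atTop : Filter ℝ))).mul hlogx1).add hsmall
    rw [mul_one, add_zero] at h
    apply h.congr'
    filter_upwards [eventually_gt_atTop 1] with x hx
    have hx1 : (0:ℝ) < x + 1 := by linarith
    have hp1 : (0:ℝ) < (x+1)^(b-1) := Real.rpow_pos_of_pos hx1 _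
    have hq1 : (0:ℝ) < (x+1)^(-(b-1)) := Real.rpow_pos_of_pos hx1 _
    have hWfact : b*(x+1)^(b-1)+1 = (x+1)^(b-1) * (b + (x+1)^(-(b-1))) := by
      rw [mul_add, ← Real.rpow_add hx1]
      simp [mul_comm]
    rw [hWfact, Real.log_mul (ne_of_gt hp1) (by positivity), Real.log_rpow hx1, add_div, mul_div_assoc]
  -- T2 → 0
  have hT2 : Tendsto (fun x : ℝ => C * Real.log (b*(x+1)^(b-1)+1) / (3*(b*(x+1)^(b-1)+1)) / x)
      atTop (nhds 0) := by
    have hub : Tendsto (fun x : ℝ => C/3 * (1/x)) atTop (nhds 0) := by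
      simpa using ((tendsto_inv_atTop_zero).congr (fun x : ℝ => (one_div x).symm)).const_mul (C/3)
    apply tendsto_of_tendsto_of_tendsto_of_le_of_le' tendsto_const_nhds hub
    · filter_upwards [eventually_gt_atTop 0] with x hx
      have hW1 := hWpos x hx.le
      have hlogW : (0:ℝ) ≤ Real.log (b*(x+1)^(b-1)+1) := Real.log_nonneg hW1
      positivity
    · filter_upwards [eventually_gt_atTop 0] with x hx
      have hW1 := hWpos x hx.le
      have hW0 : (0:ℝ) < b*(x+1)^(b-1)+1 := by linarith
      have hlogW : Real.log (b*(x+1)^(b-1)+1) ≤ b*(x+1)^(b-1)+1 := by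
        have := Real.log_le_sub_one_of_pos hW0
        linarith
      have h1 : C * Real.log (b*(x+1)^(b-1)+1) / (3*(b*(x+1)^(b-1)+1)) ≤ C/3 := by
        rw [div_le_div_iff₀ (by positivity) (by norm_num)]
        nlinarith [mul_le_mul_of_nonneg_left hlogW hC]
      calc C * Real.log (b*(x+1)^(b-1)+1) / (3*(b*(x+1)^(b-1)+1)) / x
          ≤ C/3 / x := by gcongr
        _ = C/3 * (1/x) := by ring
  -- T1 → L
  have hT1 : Tendsto (fun x : ℝ => (primepi (x^b) : ℝ) * Real.log (b*(x+1)^(b-1)+1)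
      / (3*(b*(x+1)^(b-1)+1)) / x) atTop (nhds ((b-1)/(3*b^2))) := by
    have hprod := ((hu.mul hα).mul hβ).mul_const (1/(3*b))
    have hLeq : ((1 * (1/b)) * (b-1)) * (1/(3*b)) = (b-1)/(3*b^2) := by
      rw [one_mul, div_mul_eq_mul_div, one_mul, div_mul_div_comm, mul_one]
      congr 1
      ring
    rw [hLeq] at hprod
    apply hprod.congr'
    filter_upwards [eventually_gt_atTop 1] with x hx
    have hx0 : (0:ℝ) < x := by linarith
    have hxb : x ^ b = x^(b-1) * x := by
      rw [← Real.rpow_add_one (ne_of_gt hx0) (b-1), sub_add_cancel]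
    have hW1 : (1:ℝ) ≤ b*(x+1)^(b-1)+1 := hWpos x hx0.le
    have hW0 : (0:ℝ) < b*(x+1)^(b-1)+1 := by linarith
    have hlx : (0:ℝ) < Real.log x := Real.log_pos hx
    have hpb1 : (0:ℝ) < x^(b-1) := Real.rpow_pos_of_pos hx0 _
    rw [Real.log_rpow hx0, hxb]
    field_simp
  -- combine
  have hg2 : Tendsto (fun x : ℝ => ((primepi (x^b):ℝ) - C) * Real.log (b*(x+1)^(b-1)+1)
      / (3*(b*(x+1)^(b-1)+1)) / x) atTop (nhds ((b-1)/(3*b^2))) := by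
    have h := hT1.sub hT2
    rw [sub_zero] at h
    apply h.congr (fun x => by ring)
  apply hg2.congr'
  filter_upwards [hev] with x hx
  rw [max_eq_right hx]

theorem stmt_17 (b : ℝ) (hb : 1 < b)
    (hPNT : Filter.Tendsto (fun x : ℝ => (primepi x : ℝ) * Real.log x / x)
      Filter.atTop (nhds 1))
    (hMV : ∃ y₀ : ℝ, 0 < y₀ ∧ ∀ x : ℝ, 0 < x → ∀ y : ℝ, y₀ ≤ y →
      ((primepi (x + y) : ℝ) - primepi x) ≤ 3 * y / Real.log y) :
    (b - 1) / (3 * b ^ 2) ≤ Filter.limsup (fun x : ℝ =>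
      (Set.ncard {m : ℕ | (∃ p : ℕ, p.Prime ∧ m = ⌊(p : ℝ) ^ (1 / b)⌋₊) ∧
        1 ≤ m ∧ (m : ℝ) ≤ x} : ℝ) / x) Filter.atTop ∧
    0 < (b - 1) / (3 * b ^ 2) := by
  have hb0 : (0:ℝ) < b := by linarith
  have hLpos : 0 < (b - 1) / (3 * b ^ 2) := div_pos (by linarith) (by positivity)
  refine ⟨?_, hLpos⟩
  obtain ⟨y₀, hy₀, hMV⟩ := hMV
  set F : ℝ → ℝ := fun x : ℝ =>
    (Set.ncard {m : ℕ | (∃ p : ℕ, p.Prime ∧ m = ⌊(p : ℝ) ^ (1 / b)⌋₊) ∧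
      1 ≤ m ∧ (m : ℝ) ≤ x} : ℝ) / x with hFdef
  set C : ℝ := (primepi ((2:ℝ)^b) : ℝ) with hCdef
  set g : ℝ → ℝ := fun x =>
    ((primepi (x ^ b) : ℝ) - C) * Real.log (max (max y₀ 3) (b*(x+1)^(b-1)+1))
      / (3 * (max (max y₀ 3) (b*(x+1)^(b-1)+1))) / x with hgdef
  have hg : Tendsto g atTop (nhds ((b-1)/(3*b^2))) :=
    tendsto_main b hb C (max y₀ 3) (Nat.cast_nonneg _) (le_max_right _ _) hPNT
  -- eventual inequality g ≤ F
  have hle : ∀ᶠ x in atTop, g x ≤ F x := by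
    filter_upwards [eventually_ge_atTop 1] with x hx
    have hx0 : (0:ℝ) < x := by linarith
    set Y : ℝ := max (max y₀ 3) (b*(x+1)^(b-1)+1) with hYdef
    have hY3 : (3:ℝ) ≤ Y := le_trans (le_max_right _ _) (le_max_left _ _)
    have hYpos : (0:ℝ) < Y := by linarith
    have hYe : Real.exp 1 ≤ Y := by
      have := Real.exp_one_lt_d9
      linarith
    have hlogY : (1:ℝ) ≤ Real.log Y := by rwa [Real.le_log_iff_exp_le hYpos]
    have hlogYpos : (0:ℝ) < Real.log Y := by linarith
    have hcount := count_lower b hb y₀ hy₀ hMV x hx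
    set A : ℕ := Set.ncard {m : ℕ | (∃ p : ℕ, p.Prime ∧ m = ⌊(p : ℝ) ^ (1 / b)⌋₊) ∧
      1 ≤ m ∧ (m : ℝ) ≤ x} with hAdef
    have hmain : ((primepi (x ^ b) : ℝ) - C) * Real.log Y / (3 * Y) ≤ (A:ℝ) := by
      rw [div_le_iff₀ (by positivity)]
      have he : 3 * Y / Real.log Y * (A:ℝ) * Real.log Y = 3 * Y * (A:ℝ) := by
        field_simp
      have h3 := mul_le_mul_of_nonneg_right hcount hlogYpos.le
      rw [he] at h3
      nlinarith
    show ((primepi (x ^ b) : ℝ) - C) * Real.log Y / (3 * Y) / x ≤ (A:ℝ) / x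
    gcongr
  -- boundedness of F
  have hF1 : ∀ᶠ x in atTop, F x ≤ 1 := by
    filter_upwards [eventually_ge_atTop 1] with x hx
    have hx0 : (0:ℝ) < x := by linarith
    have hsub : {m : ℕ | (∃ p : ℕ, p.Prime ∧ m = ⌊(p : ℝ) ^ (1 / b)⌋₊) ∧
        1 ≤ m ∧ (m : ℝ) ≤ x} ⊆ ↑(Finset.Icc 1 ⌊x⌋₊) := by
      rintro m ⟨_, h1, h2⟩
      simp only [Finset.coe_Icc, Set.mem_Icc]
      exact ⟨h1, Nat.le_floor h2⟩
    have hcard : (Set.ncard {m : ℕ | (∃ p : ℕ, p.Prime ∧ m = ⌊(p : ℝ) ^ (1 / b)⌋₊) ∧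
        1 ≤ m ∧ (m : ℝ) ≤ x}) ≤ ⌊x⌋₊ := by
      have h := Set.ncard_le_ncard hsub (Finset.finite_toSet _)
      rwa [Set.ncard_coe_finset, Nat.card_Icc, Nat.add_sub_cancel] at h
    show (_ : ℝ) / x ≤ 1
    rw [div_le_one hx0]
    calc ((Set.ncard _ : ℕ) : ℝ) ≤ (⌊x⌋₊ : ℝ) := by exact_mod_cast hcard
      _ ≤ x := Nat.floor_le hx0.le
  have hF0 : ∀ᶠ x in atTop, (0:ℝ) ≤ F x := by
    filter_upwards [eventually_ge_atTop 1] with x hx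
    have hx0 : (0:ℝ) < x := by linarith
    positivity
  have hbddF : IsBoundedUnder (· ≤ ·) atTop F := isBoundedUnder_of_eventually_le hF1
  have hbddF' : IsBoundedUnder (· ≥ ·) atTop F := isBoundedUnder_of_eventually_ge hF0
  have hbddg : IsBoundedUnder (· ≥ ·) atTop g := by
    apply isBoundedUnder_of_eventually_ge (a := (b-1)/(3*b^2) - 1)
    exact hg.eventually (eventually_ge_nhds (by linarith))
  calc (b - 1) / (3 * b ^ 2) = liminf g atTop := (hg.liminf_eq).symm
    _ ≤ liminf F atTop := liminf_le_liminf hle hbddg hbddF.isCoboundedUnder_ge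
    _ ≤ limsup F atTop := liminf_le_limsup hbddF hbddF'
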